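/- There exist matrices X, Y ∈ M_n(K) such that the n² matrices X^i·Y^j, for 0 ≤ i ≤ n−1 and 0 ≤ j ≤ n−1, form a K-basis of M_n(K). -/

import Mathlib

open Matrix Polynomial
open Fin.NatCast

/-- There exist matrices `X, Y ∈ Mₙ(K)` such that the `n²` matrices `Xⁱ·Yʲ`,
`0 ≤ i, j ≤ n − 1`, form a `K`-basis of `Mₙ(K)`. -/
theorem exists_two_generic_matrices_powers_basis
    (K : Type*) [Field K] [CharZero K] (n : ℕ) (hn : 0 < n) :
    ∃ X Y : Matrix (Fin n) (Fin n) K,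
      LinearIndependent K
        (fun p : Fin n × Fin n => X ^ (p.1 : ℕ) * Y ^ (p.2 : ℕ)) ∧
      Submodule.span K
        (Set.range (fun p : Fin n × Fin n => X ^ (p.1 : ℕ) * Y ^ (p.2 : ℕ))) = ⊤ := by
  haveI : NeZero n := ⟨hn.ne'⟩
  classical
  -- the node function
  set v : Fin n → K := fun k => ((k : ℕ) : K) with hv
  have hvinj : Function.Injective v := fun a b h => Fin.val_injective (Nat.cast_injective h)
  set X : Matrix (Fin n) (Fin n) K := Matrix.diagonal v with hX
  set Y : Matrix (Fin n) (Fin n) K :=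
    Matrix.of (fun k l : Fin n => if l = k + 1 then (1 : K) else 0) with hY
  have hXpow : ∀ i : ℕ, X ^ i = Matrix.diagonal (fun k => v k ^ i) := by
    intro i
    rw [hX, Matrix.diagonal_pow]
    rfl
  have hYpow : ∀ j : ℕ,
      Y ^ j = Matrix.of (fun k l : Fin n => if l = k + (j : Fin n) then (1 : K) else 0) := by
    intro j
    induction j with
    | zero =>
      ext k l
      simp [Matrix.one_apply, eq_comm]
    | succ j ih =>
      rw [pow_succ, ih]
      ext k l
      rw [Matrix.mul_apply]
      simp only [Matrix.of_apply, hY, ite_mul, one_mul, zero_mul]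
      rw [Finset.sum_ite_eq' Finset.univ (k + (j : Fin n))]
      simp only [Finset.mem_univ, if_true]
      rw [show ((j + 1 : ℕ) : Fin n) = (j : Fin n) + 1 by push_cast; ring, ← add_assoc]
  have hXYpow : ∀ (i j : ℕ), (X ^ i * Y ^ j : Matrix (Fin n) (Fin n) K)
      = Matrix.of (fun k l : Fin n => if l = k + (j : Fin n) then v k ^ i else 0) := by
    intro i j
    rw [hXpow, hYpow]
    ext k l
    rw [Matrix.diagonal_mul]
    simp only [Matrix.of_apply, mul_ite, mul_one, mul_zero]
  -- spanning
  set f : Fin n × Fin n → Matrix (Fin n) (Fin n) K :=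
    fun p => X ^ (p.1 : ℕ) * Y ^ (p.2 : ℕ) with hf
  have hspan : Submodule.span K (Set.range f) = ⊤ := by
    rw [eq_top_iff]
    intro M _
    rw [matrix_eq_sum_single M]
    refine Submodule.sum_mem _ fun a _ => Submodule.sum_mem _ fun b _ => ?_
    rw [show Matrix.single a b (M a b) = M a b • Matrix.single a b (1 : K) by
      rw [Matrix.smul_single, smul_eq_mul, mul_one]]
    refine Submodule.smul_mem _ _ ?_
    -- show each stdBasisMatrix a b 1 is in the span
    set j : Fin n := b - a with hj
    set p : K[X] := Lagrange.basis Finset.univ v a with hp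
    have hdeg : p.natDegree < n := by
      rw [hp, Lagrange.natDegree_basis (hvinj.injOn) (Finset.mem_univ a),
        Finset.card_univ, Fintype.card_fin]
      omega
    have key : Matrix.single a b (1 : K)
        = ∑ i : Fin n, p.coeff i • f (i, j) := by
      ext k l
      rw [Matrix.sum_apply]
      simp only [hf, hXYpow, Matrix.smul_apply, Matrix.of_apply, smul_ite, smul_zero]
      rw [Finset.sum_ite_irrel, Finset.sum_const_zero, Fin.cast_val_eq_self]
      have hsum : ∑ i : Fin n, p.coeff i • v k ^ (i : ℕ) = p.eval (v k) := by
        rw [Polynomial.eval_eq_sum_range' hdeg,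
          ← Fin.sum_univ_eq_sum_range (fun i => p.coeff i * v k ^ i) n]
        simp [smul_eq_mul]
      by_cases hl : l = k + j
      · rw [if_pos hl, hsum]
        by_cases hk : k = a
        · subst hk
          have hb : l = b := by rw [hl, hj]; abel
          rw [hp, Lagrange.eval_basis_self (hvinj.injOn) (Finset.mem_univ k)]
          simp [Matrix.single, hb]
        · rw [hp, Lagrange.eval_basis_of_ne (Ne.symm hk) (Finset.mem_univ k)]
          simp only [Matrix.single, Matrix.of_apply]
          rw [if_neg]
          rintro ⟨rfl, -⟩
          exact hk rfl
      · rw [if_neg hl]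
        have : ¬(k = a ∧ l = b) := by
          rintro ⟨rfl, rfl⟩
          exact hl (by rw [hj]; abel)
        simp only [Matrix.single, Matrix.of_apply]
        rw [if_neg]
        rintro ⟨rfl, rfl⟩
        exact this ⟨rfl, rfl⟩
    rw [key]
    exact Submodule.sum_mem _ fun i _ =>
      Submodule.smul_mem _ _ (Submodule.subset_span ⟨(i, j), rfl⟩)
  refine ⟨X, Y, ?_, hspan⟩
  refine linearIndependent_of_top_le_span_of_card_eq_finrank hspan.ge ?_
  simp [Module.finrank_matrix]
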